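/- Fix K > 0. For any unital C*-algebra X, the bounded rank with respect to K is at least the real rank: rr(X) ≤ br_K(X). Concretely: if for every (n+1)-tuple (x_1,...,x_{n+1}) of self-adjoint elements of X and every ε > 0 there exists a K-unessential (n+1)-tuple (y_1,...,y_{n+1}) with ‖x_k − y_k‖ < ε for all k, then X has real rank at most n. -/
import Mathlib


/-- A tuple `(y_1,…,y_m)` of self-adjoint elements is `K`-unessential if for every rational
`δ > 0` there is a self-adjoint tuple `(z_1,…,z_m)` with `‖y_k - z_k‖ ≤ δ`, `∑ z_k²`
invertible, and `‖(∑ z_k²)⁻¹‖ ≤ 1/(K·δ²)`. -/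
def KUnessential {X : Type*} [CStarAlgebra X] (K : ℝ) {m : ℕ} (y : Fin m → X) : Prop :=
  ∀ δ : ℚ, 0 < δ → ∃ z : Fin m → X,
    (∀ k, IsSelfAdjoint (z k)) ∧ (∀ k, ‖y k - z k‖ ≤ (δ : ℝ)) ∧
    ∃ b : X, (∑ k, (z k) ^ 2) * b = 1 ∧ b * (∑ k, (z k) ^ 2) = 1 ∧
      ‖b‖ ≤ 1 / (K * (δ : ℝ) ^ 2)

/-- `rr(X) ≤ br_K(X)`: if every self-adjoint `(n+1)`-tuple can be approximated by
`K`-unessential self-adjoint `(n+1)`-tuples, then `X` has real rank at most `n`. -/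
theorem stmt_5 {X : Type*} [CStarAlgebra X] (K : ℝ) (hK : 0 < K) (n : ℕ)
    (h : ∀ x : Fin (n + 1) → X, (∀ k, IsSelfAdjoint (x k)) → ∀ ε : ℝ, 0 < ε →
      ∃ y : Fin (n + 1) → X, (∀ k, IsSelfAdjoint (y k)) ∧ KUnessential K y ∧
        ∀ k, ‖x k - y k‖ < ε) :
    ∀ x : Fin (n + 1) → X, (∀ k, IsSelfAdjoint (x k)) → ∀ ε : ℝ, 0 < ε →
      ∃ y : Fin (n + 1) → X, (∀ k, IsSelfAdjoint (y k)) ∧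
        IsUnit (∑ k, (y k) ^ 2) ∧ ∀ k, ‖x k - y k‖ < ε := by
  intro x hx ε hε
  obtain ⟨y, hy, hun, hxy⟩ := h x hx (ε / 2) (by linarith)
  obtain ⟨δ, hδ0, hδ⟩ := exists_rat_btwn (show (0:ℝ) < ε / 2 by linarith)
  have hδ0' : (0:ℚ) < δ := by exact_mod_cast hδ0
  obtain ⟨z, hz, hyz, b, hb1, hb2, -⟩ := hun δ hδ0'
  refine ⟨z, hz, ⟨⟨_, b, hb1, hb2⟩, rfl⟩, fun k => ?_⟩
  calc ‖x k - z k‖ = ‖(x k - y k) + (y k - z k)‖ := by rw [sub_add_sub_cancel]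
    _ ≤ ‖x k - y k‖ + ‖y k - z k‖ := norm_add_le _ _
    _ < ε / 2 + ε / 2 := by have := hyz k; have := hxy k; linarith
    _ = ε := by ring
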